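/- For positive integers b1, b2 and a positive integer d, and integers m, n not both zero, d divides gcd_b(m,n) if and only if d^{b1} divides m and d^{b2} divides n, where gcd_b(m,n) is the largest positive integer d such that d^{b1} | m and d^{b2} | n. -/

import Mathlib

/-- Generalized gcd: the largest positive integer `d` with `d^b1 ∣ m` and `d^b2 ∣ n`. -/
noncomputable def gcdb (b1 b2 : ℕ) (m n : ℤ) : ℕ :=
  sSup {d : ℕ | 0 < d ∧ (d : ℤ) ^ b1 ∣ m ∧ (d : ℤ) ^ b2 ∣ n}

lemma lcm_pow_aux (a b k : ℕ) (hk : 0 < k) :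
    Nat.lcm a b ^ k = Nat.lcm (a ^ k) (b ^ k) := by
  rcases eq_or_ne a 0 with rfl | ha
  · simp [Nat.zero_pow hk]
  rcases eq_or_ne b 0 with rfl | hb
  · simp [Nat.zero_pow hk]
  have h1 : Nat.lcm a b ^ k ≠ 0 := pow_ne_zero _ (Nat.lcm_ne_zero ha hb)
  have h2 : Nat.lcm (a ^ k) (b ^ k) ≠ 0 :=
    Nat.lcm_ne_zero (pow_ne_zero _ ha) (pow_ne_zero _ hb)
  apply Nat.eq_of_factorization_eq h1 h2
  intro p
  rw [Nat.factorization_pow, Nat.factorization_lcm ha hb,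
    Nat.factorization_lcm (pow_ne_zero _ ha) (pow_ne_zero _ hb),
    Nat.factorization_pow, Nat.factorization_pow]
  simp only [Finsupp.smul_apply, Finsupp.sup_apply, smul_eq_mul]
  exact mul_max_of_nonneg _ _ (Nat.zero_le k)

theorem stmt_0 (b1 b2 : ℕ) (hb1 : 0 < b1) (hb2 : 0 < b2) (d : ℕ) (hd : 0 < d)
    (m n : ℤ) (hmn : m ≠ 0 ∨ n ≠ 0) :
    d ∣ gcdb b1 b2 m n ↔ ((d : ℤ) ^ b1 ∣ m ∧ (d : ℤ) ^ b2 ∣ n) := by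
  set S := {d : ℕ | 0 < d ∧ (d : ℤ) ^ b1 ∣ m ∧ (d : ℤ) ^ b2 ∣ n} with hS
  have hne : S.Nonempty := ⟨1, one_pos, by simp, by simp⟩
  have hbdd : BddAbove S := by
    refine ⟨m.natAbs + n.natAbs, fun x hx => ?_⟩
    obtain ⟨hx0, hxm, hxn⟩ := hx
    rcases hmn with h | h
    · have hdvd : x ^ b1 ∣ m.natAbs := by
        have := Int.natAbs_dvd_natAbs.mpr hxm; simpa [Int.natAbs_pow] using this
      have hle : x ^ b1 ≤ m.natAbs := Nat.le_of_dvd (Int.natAbs_pos.mpr h) hdvd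
      calc x ≤ x ^ b1 := Nat.le_self_pow hb1.ne' x
        _ ≤ m.natAbs + n.natAbs := le_trans hle (Nat.le_add_right _ _)
    · have hdvd : x ^ b2 ∣ n.natAbs := by
        have := Int.natAbs_dvd_natAbs.mpr hxn; simpa [Int.natAbs_pow] using this
      have hle : x ^ b2 ≤ n.natAbs := Nat.le_of_dvd (Int.natAbs_pos.mpr h) hdvd
      calc x ≤ x ^ b2 := Nat.le_self_pow hb2.ne' x
        _ ≤ m.natAbs + n.natAbs := le_trans hle (Nat.le_add_left _ _)
  have hgdef : gcdb b1 b2 m n = sSup S := rfl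
  have hmem : gcdb b1 b2 m n ∈ S := hgdef ▸ Nat.sSup_mem hne hbdd
  obtain ⟨hg0, hgm, hgn⟩ := hmem
  constructor
  · intro hdg
    have hdg' : (d : ℤ) ∣ (gcdb b1 b2 m n : ℤ) := Int.natCast_dvd_natCast.mpr hdg
    exact ⟨dvd_trans (pow_dvd_pow_of_dvd hdg' b1) hgm,
      dvd_trans (pow_dvd_pow_of_dvd hdg' b2) hgn⟩
  · rintro ⟨hm, hn⟩
    set g := gcdb b1 b2 m n with hg
    have hlcm : Nat.lcm d g ∈ S := by
      refine ⟨Nat.pos_of_ne_zero (Nat.lcm_ne_zero hd.ne' hg0.ne'), ?_, ?_⟩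
      · have : ((Nat.lcm d g : ℕ) : ℤ) ^ b1 = ((Nat.lcm (d ^ b1) (g ^ b1) : ℕ) : ℤ) := by
          rw [← Nat.cast_pow, lcm_pow_aux d g b1 hb1]
        rw [this]
        have := Int.coe_lcm_dvd_iff (a := (d : ℤ) ^ b1) (b := (g : ℤ) ^ b1) |>.mpr ⟨hm, hgm⟩
        rwa [Int.lcm, Int.natAbs_pow, Int.natAbs_pow, Int.natAbs_natCast, Int.natAbs_natCast] at this
      · have : ((Nat.lcm d g : ℕ) : ℤ) ^ b2 = ((Nat.lcm (d ^ b2) (g ^ b2) : ℕ) : ℤ) := by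
          rw [← Nat.cast_pow, lcm_pow_aux d g b2 hb2]
        rw [this]
        have := Int.coe_lcm_dvd_iff (a := (d : ℤ) ^ b2) (b := (g : ℤ) ^ b2) |>.mpr ⟨hn, hgn⟩
        rwa [Int.lcm, Int.natAbs_pow, Int.natAbs_pow, Int.natAbs_natCast, Int.natAbs_natCast] at this
    have h1 : Nat.lcm d g ≤ g := hgdef ▸ le_csSup hbdd hlcm
    have h2 : g ≤ Nat.lcm d g :=
      Nat.le_of_dvd (Nat.pos_of_ne_zero (Nat.lcm_ne_zero hd.ne' hg0.ne')) (Nat.dvd_lcm_right d g)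
    have : Nat.lcm d g = g := le_antisymm h1 h2
    exact this ▸ Nat.dvd_lcm_left d g
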